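/- arXiv:1206.5899 — 2 statements merged into one kernel-verified Lean document; each statement's English description precedes it below -/
import Mathlib

section
/- Let V be a vector space over a field F and let L0(n), L1(n) (n ∈ ℕ) be two families of linear operators on V (not assumed to commute in any way). Suppose the sequence (Y_n) in V satisfies the second-order operator difference equation Y_{n+2} = L0(n) Y_n + L1(n) Y_{n+1} for all n ≥ 0, with initial conditions Y_0 = 0 and Y_1 = B. Then for every n ≥ 1, Y_n = Σ_{t=0}^{⌊(n−1)/2⌋} {L0^(t) L1^(n−1−2t)}_1 B, where {L0^(u) L1^(v)}_1 is the ordered permutation operator defined in the context (with q = 1, so k_1 = 2u + v − 1). -/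
set_option maxHeartbeats 1600000


/-- The set `S^r_{u,v}` of pairs of `r`-tuples of nonnegative integers
`(τ_1,…,τ_r)`, `(s_1,…,s_r)` with `Σ τ_i = u`, `Σ s_i = v`, where for `r = 1`
there is no further constraint, and for `r ≥ 2` one requires `s_1 ≥ 1`,
`τ_r ≥ 1`, and `τ_i ≥ 1`, `s_i ≥ 1` for all `2 ≤ i ≤ r − 1`. -/
def Sset (r u v : ℕ) : Set ((Fin r → ℕ) × (Fin r → ℕ)) :=
  {p | (∑ i, p.1 i) = u ∧ (∑ i, p.2 i) = v ∧
    (2 ≤ r → ∀ i : Fin r,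
      ((i : ℕ) = 0 → 1 ≤ p.2 i) ∧
      ((i : ℕ) = r - 1 → 1 ≤ p.1 i) ∧
      (1 ≤ (i : ℕ) → (i : ℕ) ≤ r - 2 → 1 ≤ p.1 i ∧ 1 ≤ p.2 i))}

/-- The ordered operator `[L0^{τ_1} L1^{s_1} ⋯ L0^{τ_r} L1^{s_r}]_q` with
`k_q = 2u + v − q`:  the composition (written left to right, i.e. as a product
in `Module.End`) over `j = 1,…,r` of the block
`L0(k_q − 2T_{j−1} − S_{j−1}) ⋯ L0(k_q − 2T_{j−1} − S_{j−1} − 2(τ_j − 1))`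
followed by
`L1(k_q − 2T_j − S_{j−1}) ⋯ L1(k_q − 2T_j − S_{j−1} − (s_j − 1))`,
where `T_j = τ_1 + ⋯ + τ_j` and `S_j = s_1 + ⋯ + s_j`. -/
def orderedOp {F V : Type*} [Field F] [AddCommGroup V] [Module F V]
    (L0 L1 : ℕ → Module.End F V) (q u v r : ℕ) (τ s : Fin r → ℕ) :
    Module.End F V :=
  letI k : ℕ := 2 * u + v - q
  letI τ' : ℕ → ℕ := fun i => if h : i < r then τ ⟨i, h⟩ else 0
  letI s' : ℕ → ℕ := fun i => if h : i < r then s ⟨i, h⟩ else 0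
  letI T : ℕ → ℕ := fun j => ∑ i ∈ Finset.range j, τ' i
  letI S : ℕ → ℕ := fun j => ∑ i ∈ Finset.range j, s' i
  ((List.range r).map (fun j =>
    (((List.range (τ' j)).map (fun a => L0 (k - 2 * T j - S j - 2 * a))).prod) *
    (((List.range (s' j)).map (fun b => L1 (k - 2 * T (j + 1) - S j - b))).prod))).prod

/-- The ordered permutation operator
`{L0^(u) L1^(v)}_q = Σ_{r=1}^{min(u,v)+1} Σ_{((τ),(s)) ∈ S^r_{u,v}}
[L0^{τ_1} L1^{s_1} ⋯ L0^{τ_r} L1^{s_r}]_q`. -/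
noncomputable def curly {F V : Type*} [Field F] [AddCommGroup V] [Module F V]
    (L0 L1 : ℕ → Module.End F V) (q u v : ℕ) : Module.End F V :=
  ∑ r ∈ Finset.Icc 1 (min u v + 1),
    ∑ᶠ p ∈ Sset r u v, orderedOp L0 L1 q u v r p.1 p.2

section Aux
variable {F V : Type*} [Field F] [AddCommGroup V] [Module F V]
variable (L0 L1 : ℕ → Module.End F V)


def pow0 (c t : ℕ) : Module.End F V := ((List.range t).map (fun a => L0 (c - 2*a))).prod
def pow1 (c s : ℕ) : Module.End F V := ((List.range s).map (fun b => L1 (c - b))).prod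

def blocksOp : ℕ → List (ℕ × ℕ) → Module.End F V
  | _, [] => 1
  | c, (t, s) :: l => pow0 L0 c t * pow1 L1 (c - 2*t) s * blocksOp (c - 2*t - s) l

lemma key : ∀ (r : ℕ) (τ s : ℕ → ℕ) (c : ℕ),
    ((List.range r).map (fun j =>
      (((List.range (τ j)).map (fun a =>
        L0 (c - 2 * (∑ i ∈ Finset.range j, τ i) - (∑ i ∈ Finset.range j, s i) - 2 * a))).prod) *
      (((List.range (s j)).map (fun b =>
        L1 (c - 2 * (∑ i ∈ Finset.range (j+1), τ i) - (∑ i ∈ Finset.range j, s i) - b))).prod))).prod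
    = blocksOp L0 L1 c ((List.range r).map (fun j => (τ j, s j))) := by
  intro r
  induction r with
  | zero => intro τ s c; simp [blocksOp]
  | succ n ih =>
    intro τ s c
    rw [List.range_succ_eq_map, List.map_cons, List.map_cons, List.prod_cons,
      List.map_map, List.map_map]
    show _ * _ = blocksOp L0 L1 c ((τ 0, s 0) :: List.map ((fun j => (τ j, s j)) ∘ Nat.succ) (List.range n))
    have hrhs : blocksOp L0 L1 c ((τ 0, s 0) :: List.map ((fun j => (τ j, s j)) ∘ Nat.succ) (List.range n))
        = pow0 L0 c (τ 0) * pow1 L1 (c - 2 * τ 0) (s 0) *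
          blocksOp L0 L1 (c - 2 * τ 0 - s 0)
            (List.map ((fun j => (τ j, s j)) ∘ Nat.succ) (List.range n)) := rfl
    rw [hrhs]
    have htail :
        List.map ((fun j =>
          (((List.range (τ j)).map (fun a =>
            L0 (c - 2 * (∑ i ∈ Finset.range j, τ i) - (∑ i ∈ Finset.range j, s i) - 2 * a))).prod) *
          (((List.range (s j)).map (fun b =>
            L1 (c - 2 * (∑ i ∈ Finset.range (j+1), τ i) - (∑ i ∈ Finset.range j, s i) - b))).prod))
            ∘ Nat.succ) (List.range n)
        = List.map (fun j =>
          (((List.range (τ (j+1))).map (fun a =>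
            L0 ((c - 2 * τ 0 - s 0) - 2 * (∑ i ∈ Finset.range j, τ (i+1)) - (∑ i ∈ Finset.range j, s (i+1)) - 2 * a))).prod) *
          (((List.range (s (j+1))).map (fun b =>
            L1 ((c - 2 * τ 0 - s 0) - 2 * (∑ i ∈ Finset.range (j+1), τ (i+1)) - (∑ i ∈ Finset.range j, s (i+1)) - b))).prod))
          (List.range n) := by
      apply List.map_congr_left
      intro x _
      simp only [Function.comp_apply, Nat.succ_eq_add_one]
      have h1 := Finset.sum_range_succ' τ x
      have h2 := Finset.sum_range_succ' s x
      have h3 := Finset.sum_range_succ' τ (x+1)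
      congr 1
      · exact congrArg List.prod (List.map_congr_left (fun a _ => by congr 1 <;> omega))
      · exact congrArg List.prod (List.map_congr_left (fun b _ => by congr 1 <;> omega))
    have hh0 : ((List.range (τ 0)).map (fun a =>
        L0 (c - 2 * (∑ i ∈ Finset.range 0, τ i) - (∑ i ∈ Finset.range 0, s i) - 2 * a))).prod
        = pow0 L0 c (τ 0) := by
      simp [pow0]
    have hh1 : ((List.range (s 0)).map (fun b =>
        L1 (c - 2 * (∑ i ∈ Finset.range (0+1), τ i) - (∑ i ∈ Finset.range 0, s i) - b))).prod
        = pow1 L1 (c - 2 * τ 0) (s 0) := by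
      simp [pow1]
    have ihx := ih (fun i => τ (i+1)) (fun i => s (i+1)) (c - 2 * τ 0 - s 0)
    have hmap : List.map ((fun j => (τ j, s j)) ∘ Nat.succ) (List.range n)
        = List.map (fun j => (τ (j+1), s (j+1))) (List.range n) :=
      List.map_congr_left (fun x _ => rfl)
    rw [hh0, hh1, htail, ihx, hmap]


lemma orderedOp_eq_blocksOp (q u v r : ℕ) (τ s : Fin r → ℕ) :
    orderedOp L0 L1 q u v r τ s
      = blocksOp L0 L1 (2*u+v-q) (List.ofFn (fun i => (τ i, s i))) := by
  unfold orderedOp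
  rw [key L0 L1 r (fun i => if h : i < r then τ ⟨i, h⟩ else 0)
    (fun i => if h : i < r then s ⟨i, h⟩ else 0) (2*u+v-q)]
  congr 1
  apply List.ext_getElem (by simp)
  intro i h1 h2
  simp only [List.getElem_map, List.getElem_range, List.getElem_ofFn]
  have hi : i < r := by simpa using h1
  rw [dif_pos hi, dif_pos hi]

open scoped Classical in
noncomputable def S2 (r u v : ℕ) : Finset ((Fin r → ℕ) × (Fin r → ℕ)) :=
  (Finset.Nat.antidiagonalTuple r u ×ˢ Finset.Nat.antidiagonalTuple r v).filter
    (fun p => (2 ≤ r → ∀ i : Fin r,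
      ((i : ℕ) = 0 → 1 ≤ p.2 i) ∧
      ((i : ℕ) = r - 1 → 1 ≤ p.1 i) ∧
      (1 ≤ (i : ℕ) → (i : ℕ) ≤ r - 2 → 1 ≤ p.1 i ∧ 1 ≤ p.2 i)))

lemma mem_S2 {r u v : ℕ} {p : (Fin r → ℕ) × (Fin r → ℕ)} :
    p ∈ S2 r u v ↔ p ∈ Sset r u v := by
  simp [S2, Sset, Finset.mem_filter, Finset.mem_product,
    Finset.Nat.mem_antidiagonalTuple, and_assoc]

lemma Sset_coe (r u v : ℕ) : Sset r u v = ↑(S2 r u v) := by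
  ext p; rw [Finset.mem_coe, mem_S2]

lemma curly_eq (q u v : ℕ) : curly L0 L1 q u v
    = ∑ r ∈ Finset.Icc 1 (min u v + 1), ∑ p ∈ S2 r u v,
        blocksOp L0 L1 (2*u+v-q) (List.ofFn fun i => (p.1 i, p.2 i)) := by
  unfold curly
  refine Finset.sum_congr rfl (fun r _ => ?_)
  rw [Sset_coe, finsum_mem_coe_finset]
  exact Finset.sum_congr rfl (fun p _ => orderedOp_eq_blocksOp L0 L1 q u v r p.1 p.2)

lemma S2_empty {r u v : ℕ} (h : min u v + 1 < r) : S2 r u v = ∅ := by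
  rw [Finset.eq_empty_iff_forall_notMem]
  intro p hp
  rw [mem_S2] at hp
  obtain ⟨hu, hv, hc⟩ := hp
  have h2 : 2 ≤ r := by omega
  have hcc := hc h2
  have hA : (Finset.univ.filter (fun i : Fin r => 1 ≤ (i : ℕ))).card = r - 1 := by
    have hsplit := Finset.card_filter_add_card_filter_not
      (s := (Finset.univ : Finset (Fin r))) (p := fun i : Fin r => 1 ≤ (i : ℕ))
    have hone : (Finset.univ.filter (fun i : Fin r => ¬ 1 ≤ (i : ℕ))) = {(⟨0, by omega⟩ : Fin r)} := by
      ext j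
      simp only [Finset.mem_filter, Finset.mem_univ, true_and, Finset.mem_singleton, Fin.ext_iff]
      omega
    rw [hone] at hsplit
    simp only [Finset.card_singleton, Finset.card_univ, Fintype.card_fin] at hsplit
    omega
  have hB : (Finset.univ.filter (fun i : Fin r => (i : ℕ) ≤ r - 2)).card = r - 1 := by
    have hsplit := Finset.card_filter_add_card_filter_not
      (s := (Finset.univ : Finset (Fin r))) (p := fun i : Fin r => (i : ℕ) ≤ r - 2)
    have hone : (Finset.univ.filter (fun i : Fin r => ¬ (i : ℕ) ≤ r - 2)) = {(⟨r-1, by omega⟩ : Fin r)} := by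
      ext j
      simp only [Finset.mem_filter, Finset.mem_univ, true_and, Finset.mem_singleton, Fin.ext_iff]
      have := j.isLt
      omega
    rw [hone] at hsplit
    simp only [Finset.card_singleton, Finset.card_univ, Fintype.card_fin] at hsplit
    omega
  have hu1 : r - 1 ≤ u := by
    have hle : ∀ i ∈ Finset.univ.filter (fun i : Fin r => 1 ≤ (i : ℕ)), 1 ≤ p.1 i := by
      intro i hi
      rw [Finset.mem_filter] at hi
      have hlt := i.isLt
      rcases le_or_gt ((i : ℕ)) (r - 2) with hc1 | hc1
      · exact ((hcc i).2.2 hi.2 hc1).1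
      · exact (hcc i).2.1 (by omega)
    have h1 : (Finset.univ.filter (fun i : Fin r => 1 ≤ (i : ℕ))).card • 1
        ≤ ∑ i ∈ Finset.univ.filter (fun i : Fin r => 1 ≤ (i : ℕ)), p.1 i :=
      Finset.card_nsmul_le_sum _ _ _ hle
    have h2' : ∑ i ∈ Finset.univ.filter (fun i : Fin r => 1 ≤ (i : ℕ)), p.1 i ≤ ∑ i, p.1 i :=
      Finset.sum_le_sum_of_subset (Finset.subset_univ _)
    rw [hA] at h1
    simp only [smul_eq_mul, mul_one] at h1
    omega
  have hv1 : r - 1 ≤ v := by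
    have hle : ∀ i ∈ Finset.univ.filter (fun i : Fin r => (i : ℕ) ≤ r - 2), 1 ≤ p.2 i := by
      intro i hi
      rw [Finset.mem_filter] at hi
      rcases Nat.eq_zero_or_pos (i : ℕ) with hc1 | hc1
      · exact (hcc i).1 hc1
      · exact ((hcc i).2.2 hc1 hi.2).2
    have h1 : (Finset.univ.filter (fun i : Fin r => (i : ℕ) ≤ r - 2)).card • 1
        ≤ ∑ i ∈ Finset.univ.filter (fun i : Fin r => (i : ℕ) ≤ r - 2), p.2 i :=
      Finset.card_nsmul_le_sum _ _ _ hle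
    have h2' : ∑ i ∈ Finset.univ.filter (fun i : Fin r => (i : ℕ) ≤ r - 2), p.2 i ≤ ∑ i, p.2 i :=
      Finset.sum_le_sum_of_subset (Finset.subset_univ _)
    rw [hB] at h1
    simp only [smul_eq_mul, mul_one] at h1
    omega
  omega

noncomputable def csum (u v N : ℕ) : Module.End F V :=
  ∑ i ∈ Finset.range N, ∑ p ∈ S2 (i+1) u v,
    blocksOp L0 L1 (2*u+v-1) (List.ofFn fun j => (p.1 j, p.2 j))

lemma curly_eq_csum (u v : ℕ) :
    curly L0 L1 1 u v = csum L0 L1 u v (min u v + 1) := by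
  rw [curly_eq, ← Finset.Ico_add_one_right_eq_Icc, Finset.sum_Ico_eq_sum_range]
  unfold csum
  refine Finset.sum_congr (by norm_num) (fun i _ => ?_)
  rw [Nat.add_comm 1 i]

lemma csum_extend (u v N : ℕ) (h : min u v + 1 ≤ N) :
    csum L0 L1 u v N = curly L0 L1 1 u v := by
  rw [curly_eq_csum]
  unfold csum
  refine (Finset.sum_subset (Finset.range_subset_range.mpr h) ?_).symm
  intro i _ hi
  rw [Finset.mem_range, not_lt] at hi
  rw [S2_empty (by omega), Finset.sum_empty]

noncomputable def Z : ℕ → ℕ → Module.End F V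
  | 0, 0 => 1
  | 0, (v+1) => L1 (v + 1 - 1) * Z 0 v
  | (u+1), 0 => L0 (2*(u+1) + 0 - 1) * Z u 0
  | (u+1), (v+1) => L0 (2*(u+1) + (v+1) - 1) * Z u (v+1)
      + L1 (2*(u+1) + (v+1) - 1) * Z (u+1) v

lemma Z_rec (u v : ℕ) (h : ¬ (u = 0 ∧ v = 0)) :
    Z L0 L1 u v = (if u = 0 then 0 else L0 (2*u+v-1) * Z L0 L1 (u-1) v)
      + (if v = 0 then 0 else L1 (2*u+v-1) * Z L0 L1 u (v-1)) := by
  match u, v with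
  | 0, 0 => exact absurd ⟨rfl, rfl⟩ h
  | 0, (v+1) => simp [Z]
  | (u+1), 0 => simp [Z]
  | (u+1), (v+1) => simp [Z]

lemma pow0_succ (c t : ℕ) : pow0 L0 c (t+1) = L0 c * pow0 L0 (c-2) t := by
  unfold pow0
  rw [List.range_succ_eq_map, List.map_cons, List.prod_cons, List.map_map]
  have h : List.map ((fun a => L0 (c - 2*a)) ∘ Nat.succ) (List.range t)
      = List.map (fun a => L0 (c-2 - 2*a)) (List.range t) :=
    List.map_congr_left (fun x _ => by simp only [Function.comp_apply]; congr 1; omega)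
  rw [h]; norm_num

lemma pow1_succ (c s : ℕ) : pow1 L1 c (s+1) = L1 c * pow1 L1 (c-1) s := by
  unfold pow1
  rw [List.range_succ_eq_map, List.map_cons, List.prod_cons, List.map_map]
  have h : List.map ((fun b => L1 (c - b)) ∘ Nat.succ) (List.range s)
      = List.map (fun b => L1 (c-1 - b)) (List.range s) :=
    List.map_congr_left (fun x _ => by simp only [Function.comp_apply]; congr 1; omega)
  rw [h]; norm_num

lemma blocksOp_cons0 (c t s : ℕ) (l : List (ℕ × ℕ)) :
    blocksOp L0 L1 c ((t+1, s) :: l) = L0 c * blocksOp L0 L1 (c-2) ((t, s) :: l) := by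
  show pow0 L0 c (t+1) * pow1 L1 (c - 2*(t+1)) s * blocksOp L0 L1 (c - 2*(t+1) - s) l
    = L0 c * (pow0 L0 (c-2) t * pow1 L1 ((c-2) - 2*t) s * blocksOp L0 L1 ((c-2) - 2*t - s) l)
  have h2 : c - 2*(t+1) - s = (c-2) - 2*t - s := by omega
  have h1 : c - 2*(t+1) = (c-2) - 2*t := by omega
  rw [h2, h1, pow0_succ]; simp only [mul_assoc]

lemma blocksOp_cons1 (c s : ℕ) (l : List (ℕ × ℕ)) :
    blocksOp L0 L1 c ((0, s+1) :: l) = L1 c * blocksOp L0 L1 (c-1) ((0, s) :: l) := by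
  show pow0 L0 c 0 * pow1 L1 (c - 2*0) (s+1) * blocksOp L0 L1 (c - 2*0 - (s+1)) l
    = L1 c * (pow0 L0 (c-1) 0 * pow1 L1 ((c-1) - 2*0) s * blocksOp L0 L1 ((c-1) - 2*0 - s) l)
  have h0 : pow0 L0 c 0 = 1 := by simp [pow0]
  have h0' : pow0 L0 (c-1) 0 = 1 := by simp [pow0]
  have h3 : c - 2*0 - (s+1) = (c-1) - 2*0 - s := by omega
  have h1 : c - 2*0 = c := by omega
  rw [h0, h0', h3, h1, pow1_succ]; simp only [Nat.sub_zero, one_mul, mul_assoc, Nat.mul_zero]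

lemma blocksOp_pop (c : ℕ) (l : List (ℕ × ℕ)) :
    blocksOp L0 L1 c ((0, 1) :: l) = L1 c * blocksOp L0 L1 (c-1) l := by
  show pow0 L0 c 0 * pow1 L1 (c - 2*0) 1 * blocksOp L0 L1 (c - 2*0 - 1) l = _
  have h0 : pow0 L0 c 0 = 1 := by simp [pow0]
  have h1 : pow1 L1 (c - 2*0) 1 = L1 c := by simp [pow1, List.range_succ]
  rw [h0, h1, one_mul]
  congr 1

lemma mem_S2' {r u v : ℕ} {p : (Fin r → ℕ) × (Fin r → ℕ)} :
    p ∈ S2 r u v ↔ (∑ i, p.1 i) = u ∧ (∑ i, p.2 i) = v ∧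
    (2 ≤ r → ∀ i : Fin r,
      ((i : ℕ) = 0 → 1 ≤ p.2 i) ∧
      ((i : ℕ) = r - 1 → 1 ≤ p.1 i) ∧
      (1 ≤ (i : ℕ) → (i : ℕ) ≤ r - 2 → 1 ≤ p.1 i ∧ 1 ≤ p.2 i)) := by
  simp [S2, Finset.mem_filter, Finset.mem_product,
    Finset.Nat.mem_antidiagonalTuple, and_assoc]

lemma bijA (r u v : ℕ) (hu : 1 ≤ u) :
    ∑ p ∈ (S2 (r+1) u v).filter (fun p => ¬ p.1 0 = 0),
      blocksOp L0 L1 (2*u+v-1) (List.ofFn fun j => (p.1 j, p.2 j))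
    = L0 (2*u+v-1) * ∑ p ∈ S2 (r+1) (u-1) v,
        blocksOp L0 L1 (2*(u-1)+v-1) (List.ofFn fun j => (p.1 j, p.2 j)) := by
  classical
  rw [Finset.mul_sum]
  refine Finset.sum_nbij' (i := fun p => (Function.update p.1 0 (p.1 0 - 1), p.2))
    (j := fun q => (Function.update q.1 0 (q.1 0 + 1), q.2)) ?_ ?_ ?_ ?_ ?_
  · intro p hp
    rw [Finset.mem_filter, mem_S2'] at hp
    obtain ⟨⟨h1, h2, h3⟩, hp0⟩ := hp
    rw [mem_S2']
    dsimp only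
    have hs : ∑ i, Function.update p.1 0 (p.1 0 - 1) i
        = (p.1 0 - 1) + ∑ i : Fin r, p.1 i.succ := by
      rw [Fin.sum_univ_succ, Function.update_self]
      exact congrArg (fun x => _ + x)
        (Finset.sum_congr rfl (fun i _ => Function.update_of_ne (Fin.succ_ne_zero i) _ _))
    have hs' : ∑ i, p.1 i = p.1 0 + ∑ i : Fin r, p.1 i.succ := Fin.sum_univ_succ _
    refine ⟨by rw [hs]; omega, h2, ?_⟩
    intro h2r i
    obtain ⟨c1, c2, c3⟩ := h3 h2r i
    by_cases hi0 : i = 0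
    · subst hi0
      have h00 : ((0 : Fin (r+1)) : ℕ) = 0 := rfl
      exact ⟨c1, fun hh => absurd hh (by omega), fun hh _ => absurd hh (by omega)⟩
    · rw [Function.update_of_ne hi0]
      exact ⟨c1, c2, c3⟩
  · intro q hq
    rw [mem_S2'] at hq
    obtain ⟨h1, h2, h3⟩ := hq
    rw [Finset.mem_filter, mem_S2']
    dsimp only
    have hs : ∑ i, Function.update q.1 0 (q.1 0 + 1) i
        = (q.1 0 + 1) + ∑ i : Fin r, q.1 i.succ := by
      rw [Fin.sum_univ_succ, Function.update_self]
      exact congrArg (fun x => _ + x)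
        (Finset.sum_congr rfl (fun i _ => Function.update_of_ne (Fin.succ_ne_zero i) _ _))
    have hs' : ∑ i, q.1 i = q.1 0 + ∑ i : Fin r, q.1 i.succ := Fin.sum_univ_succ _
    refine ⟨⟨by rw [hs]; omega, h2, ?_⟩, by simp⟩
    intro h2r i
    obtain ⟨c1, c2, c3⟩ := h3 h2r i
    by_cases hi0 : i = 0
    · subst hi0
      have h00 : ((0 : Fin (r+1)) : ℕ) = 0 := rfl
      exact ⟨c1, fun hh => absurd hh (by omega), fun hh _ => absurd hh (by omega)⟩
    · rw [Function.update_of_ne hi0]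
      exact ⟨c1, c2, c3⟩
  · intro p hp
    rw [Finset.mem_filter] at hp
    have hp0 : 1 ≤ p.1 0 := by omega
    dsimp only
    rw [Function.update_self, Function.update_idem]
    have he : p.1 0 - 1 + 1 = p.1 0 := by omega
    rw [he, Function.update_eq_self]
  · intro q hq
    dsimp only
    rw [Function.update_self, Function.update_idem]
    have he : q.1 0 + 1 - 1 = q.1 0 := by omega
    rw [he, Function.update_eq_self]
  · intro p hp
    rw [Finset.mem_filter] at hp
    have hp0 : 1 ≤ p.1 0 := by omega
    have hlist : (List.ofFn fun j : Fin (r+1) => (p.1 j, p.2 j))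
        = ((p.1 0 - 1) + 1, p.2 0) :: List.ofFn (fun j : Fin r => (p.1 j.succ, p.2 j.succ)) := by
      rw [List.ofFn_succ]
      congr 1
      simp only [Prod.mk.injEq]
      exact ⟨by omega, trivial⟩
    have hlist2 : (List.ofFn fun j : Fin (r+1) =>
          (Function.update p.1 0 (p.1 0 - 1) j, p.2 j))
        = (p.1 0 - 1, p.2 0) :: List.ofFn (fun j : Fin r => (p.1 j.succ, p.2 j.succ)) := by
      rw [List.ofFn_succ]
      congr 1
    rw [hlist, blocksOp_cons0]
    have hc : 2*u+v-1-2 = 2*(u-1)+v-1 := by omega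
    rw [hc]
    congr 1
    rw [← hlist2]
lemma bijB1 (r u v : ℕ) (hv : 1 ≤ v) :
    ∑ p ∈ (S2 (r+1) u v).filter (fun p => p.1 0 = 0 ∧ (r = 0 ∨ 2 ≤ p.2 0)),
      blocksOp L0 L1 (2*u+v-1) (List.ofFn fun j => (p.1 j, p.2 j))
    = L1 (2*u+v-1) * ∑ q ∈ (S2 (r+1) u (v-1)).filter (fun q => q.1 0 = 0),
        blocksOp L0 L1 (2*u+(v-1)-1) (List.ofFn fun j => (q.1 j, q.2 j)) := by
  classical
  rw [Finset.mul_sum]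
  have key20 : ∀ p : (Fin (r+1) → ℕ) × (Fin (r+1) → ℕ), p ∈ S2 (r+1) u v →
      (r = 0 ∨ 2 ≤ p.2 0) → 1 ≤ p.2 0 := by
    intro p hp hd
    rw [mem_S2'] at hp
    rcases hd with hr | h2
    · subst hr
      have hs' : ∑ i, p.2 i = p.2 0 + ∑ i : Fin 0, p.2 i.succ := Fin.sum_univ_succ _
      have h0 : (∑ i : Fin 0, p.2 i.succ) = 0 := Finset.sum_empty
      omega
    · omega
  refine Finset.sum_nbij' (i := fun p => (p.1, Function.update p.2 0 (p.2 0 - 1)))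
    (j := fun q => (q.1, Function.update q.2 0 (q.2 0 + 1))) ?_ ?_ ?_ ?_ ?_
  · intro p hp
    rw [Finset.mem_filter] at hp
    have hp20 : 1 ≤ p.2 0 := key20 p hp.1 hp.2.2
    obtain ⟨hmem, hp10, hd⟩ := hp
    rw [mem_S2'] at hmem
    obtain ⟨h1, h2, h3⟩ := hmem
    rw [Finset.mem_filter, mem_S2']
    dsimp only
    have hs : ∑ i, Function.update p.2 0 (p.2 0 - 1) i
        = (p.2 0 - 1) + ∑ i : Fin r, p.2 i.succ := by
      rw [Fin.sum_univ_succ, Function.update_self]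
      exact congrArg (fun x => _ + x)
        (Finset.sum_congr rfl (fun i _ => Function.update_of_ne (Fin.succ_ne_zero i) _ _))
    have hs' : ∑ i, p.2 i = p.2 0 + ∑ i : Fin r, p.2 i.succ := Fin.sum_univ_succ _
    refine ⟨⟨h1, by rw [hs]; omega, ?_⟩, hp10⟩
    intro h2r i
    obtain ⟨c1, c2, c3⟩ := h3 h2r i
    by_cases hi0 : i = 0
    · subst hi0
      have h00 : ((0 : Fin (r+1)) : ℕ) = 0 := rfl
      rw [Function.update_self]
      have hr2 : 2 ≤ p.2 0 := by rcases hd with hr | h2'; omega; omega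
      exact ⟨fun _ => by omega, fun hh => absurd hh (by omega),
        fun hh _ => absurd hh (by omega)⟩
    · rw [Function.update_of_ne hi0]
      exact ⟨c1, c2, c3⟩
  · intro q hq
    rw [Finset.mem_filter] at hq
    obtain ⟨hmem, hq10⟩ := hq
    rw [mem_S2'] at hmem
    obtain ⟨h1, h2, h3⟩ := hmem
    rw [Finset.mem_filter, mem_S2']
    dsimp only
    have hs : ∑ i, Function.update q.2 0 (q.2 0 + 1) i
        = (q.2 0 + 1) + ∑ i : Fin r, q.2 i.succ := by
      rw [Fin.sum_univ_succ, Function.update_self]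
      exact congrArg (fun x => _ + x)
        (Finset.sum_congr rfl (fun i _ => Function.update_of_ne (Fin.succ_ne_zero i) _ _))
    have hs' : ∑ i, q.2 i = q.2 0 + ∑ i : Fin r, q.2 i.succ := Fin.sum_univ_succ _
    refine ⟨⟨h1, by rw [hs]; omega, ?_⟩, hq10, ?_⟩
    · intro h2r i
      obtain ⟨c1, c2, c3⟩ := h3 h2r i
      by_cases hi0 : i = 0
      · subst hi0
        have h00 : ((0 : Fin (r+1)) : ℕ) = 0 := rfl
        rw [Function.update_self]
        exact ⟨fun _ => by omega, fun hh => absurd hh (by omega),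
          fun hh _ => absurd hh (by omega)⟩
      · rw [Function.update_of_ne hi0]
        exact ⟨c1, c2, c3⟩
    · rcases Nat.eq_zero_or_pos r with hr | hr
      · exact Or.inl hr
      · refine Or.inr ?_
        rw [Function.update_self]
        have := (h3 (by omega) 0).1 rfl
        omega
  · intro p hp
    rw [Finset.mem_filter] at hp
    have hp20 : 1 ≤ p.2 0 := key20 p hp.1 hp.2.2
    dsimp only
    rw [Function.update_self, Function.update_idem]
    have he : p.2 0 - 1 + 1 = p.2 0 := by omega
    rw [he, Function.update_eq_self]
  · intro q hq
    dsimp only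
    rw [Function.update_self, Function.update_idem]
    have he : q.2 0 + 1 - 1 = q.2 0 := by omega
    rw [he, Function.update_eq_self]
  · intro p hp
    rw [Finset.mem_filter] at hp
    have hp20 : 1 ≤ p.2 0 := key20 p hp.1 hp.2.2
    have hp10 : p.1 0 = 0 := hp.2.1
    have hlist : (List.ofFn fun j : Fin (r+1) => (p.1 j, p.2 j))
        = (0, (p.2 0 - 1) + 1) :: List.ofFn (fun j : Fin r => (p.1 j.succ, p.2 j.succ)) := by
      rw [List.ofFn_succ]
      congr 1
      simp only [Prod.mk.injEq]
      exact ⟨hp10, by omega⟩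
    have hlist2 : (List.ofFn fun j : Fin (r+1) =>
          (p.1 j, Function.update p.2 0 (p.2 0 - 1) j))
        = (0, p.2 0 - 1) :: List.ofFn (fun j : Fin r => (p.1 j.succ, p.2 j.succ)) := by
      rw [List.ofFn_succ]
      congr 1
      simp only [Prod.mk.injEq]
      exact ⟨hp10, Function.update_self _ _ _⟩
    rw [hlist, blocksOp_cons1]
    have hc : 2*u+v-1-1 = 2*u+(v-1)-1 := by omega
    rw [hc]
    congr 1
    rw [← hlist2]

lemma bijB2 (r u v : ℕ) (hv : 1 ≤ v) :
    ∑ p ∈ (S2 (r+2) u v).filter (fun p => p.1 0 = 0 ∧ ¬(r + 1 = 0 ∨ 2 ≤ p.2 0)),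
      blocksOp L0 L1 (2*u+v-1) (List.ofFn fun j => (p.1 j, p.2 j))
    = L1 (2*u+v-1) * ∑ q ∈ (S2 (r+1) u (v-1)).filter (fun q => ¬ q.1 0 = 0),
        blocksOp L0 L1 (2*u+(v-1)-1) (List.ofFn fun j => (q.1 j, q.2 j)) := by
  classical
  rw [Finset.mul_sum]
  refine Finset.sum_nbij' (i := fun p => (Fin.tail p.1, Fin.tail p.2))
    (j := fun q => (Fin.cons 0 q.1, Fin.cons 1 q.2)) ?_ ?_ ?_ ?_ ?_
  · intro p hp
    rw [Finset.mem_filter] at hp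
    obtain ⟨hmem, hp10, hnd⟩ := hp
    rw [mem_S2'] at hmem
    obtain ⟨h1, h2, h3⟩ := hmem
    have h3' := h3 (by omega)
    have hp20 : p.2 0 = 1 := by
      have := (h3' 0).1 rfl
      omega
    rw [Finset.mem_filter, mem_S2']
    dsimp only
    have hs1 : ∑ i, p.1 i = p.1 0 + ∑ i : Fin (r+1), p.1 i.succ := Fin.sum_univ_succ _
    have hs2 : ∑ i, p.2 i = p.2 0 + ∑ i : Fin (r+1), p.2 i.succ := Fin.sum_univ_succ _
    have ht1 : ∑ i, Fin.tail p.1 i = ∑ i : Fin (r+1), p.1 i.succ := rfl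
    have ht2 : ∑ i, Fin.tail p.2 i = ∑ i : Fin (r+1), p.2 i.succ := rfl
    refine ⟨⟨by rw [ht1]; omega, by rw [ht2]; omega, ?_⟩, ?_⟩
    · intro h2r i
      obtain ⟨c1, c2, c3⟩ := h3' i.succ
      have hvs : (i.succ : ℕ) = (i : ℕ) + 1 := rfl
      have hlt := i.isLt
      refine ⟨?_, ?_, ?_⟩
      · intro hh
        exact (c3 (by omega) (by omega)).2
      · intro hh
        exact c2 (by omega)
      · intro hh1 hh2
        exact c3 (by omega) (by omega)
    · have hi1 : (1 : ℕ) < r + 2 := by omega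
      obtain ⟨d1, d2, d3⟩ := h3' ⟨1, hi1⟩
      have hval : ((⟨1, hi1⟩ : Fin (r+2)) : ℕ) = 1 := rfl
      have hps : Fin.succ (0 : Fin (r+1)) = ⟨1, hi1⟩ := rfl
      show ¬ p.1 (Fin.succ 0) = 0
      rw [hps]
      rcases Nat.eq_zero_or_pos r with hr | hr
      · have := d2 (by omega)
        omega
      · have := (d3 (by omega) (by omega)).1
        omega
  · intro q hq
    rw [Finset.mem_filter] at hq
    obtain ⟨hmem, hq10⟩ := hq
    rw [mem_S2'] at hmem
    obtain ⟨h1, h2, h3⟩ := hmem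
    rw [Finset.mem_filter, mem_S2']
    dsimp only
    have hs1 : ∑ i, Fin.cons (0:ℕ) q.1 i = (0:ℕ) + ∑ i : Fin (r+1), q.1 i := by
      rw [Fin.sum_univ_succ]
      exact congrArg (fun x => _ + x)
        (Finset.sum_congr rfl (fun i _ => by rw [Fin.cons_succ]))
    have hs2 : ∑ i, Fin.cons (1:ℕ) q.2 i = (1:ℕ) + ∑ i : Fin (r+1), q.2 i := by
      rw [Fin.sum_univ_succ]
      exact congrArg (fun x => _ + x)
        (Finset.sum_congr rfl (fun i _ => by rw [Fin.cons_succ]))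
    refine ⟨⟨by rw [hs1]; omega, by rw [hs2]; omega, ?_⟩, ?_, ?_⟩
    · intro _ i
      rcases Fin.eq_zero_or_eq_succ i with rfl | ⟨j, rfl⟩
      · refine ⟨fun _ => ?_, fun hh => ?_, fun hh _ => ?_⟩
        · rw [Fin.cons_zero]
        · exact absurd hh (by simp)
        · exact absurd hh (by simp)
      · have hvs : (j.succ : ℕ) = (j : ℕ) + 1 := rfl
        have hlt := j.isLt
        rw [Fin.cons_succ, Fin.cons_succ]
        refine ⟨fun hh => absurd hh (by omega), fun hh => ?_, fun hh1 hh2 => ?_⟩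
        · -- ↑j + 1 = r + 1, so ↑j = r
          rcases Nat.eq_zero_or_pos r with hr | hr
          · have hj0 : j = 0 := Fin.ext (by simp only [Fin.val_zero]; omega)
            subst hj0
            omega
          · exact (h3 (by omega) j).2.1 (by omega)
        · -- 1 ≤ ↑j + 1 ≤ r
          have hr : 1 ≤ r := by omega
          rcases Nat.eq_zero_or_pos (j : ℕ) with hj | hj
          · have hj0 : j = 0 := Fin.ext (by simp only [Fin.val_zero]; omega)
            subst hj0
            have hq20 : 1 ≤ q.2 0 := (h3 (by omega) 0).1 rfl
            exact ⟨by omega, hq20⟩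
          · exact (h3 (by omega) j).2.2 (by omega) (by omega)
    · rw [Fin.cons_zero]
    · rw [Fin.cons_zero]
      simp
  · intro p hp
    rw [Finset.mem_filter] at hp
    obtain ⟨hmem, hp10, hnd⟩ := hp
    rw [mem_S2'] at hmem
    have hp20 : p.2 0 = 1 := by
      have := (hmem.2.2 (by omega) 0).1 rfl
      omega
    dsimp only
    have e1 : Fin.cons (0:ℕ) (Fin.tail p.1) = p.1 := by
      have := Fin.cons_self_tail p.1
      rw [hp10] at this
      exact this
    have e2 : Fin.cons (1:ℕ) (Fin.tail p.2) = p.2 := by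
      have := Fin.cons_self_tail p.2
      rw [hp20] at this
      exact this
    rw [e1, e2]
  · intro q hq
    dsimp only
    rw [Fin.tail_cons, Fin.tail_cons]
  · intro p hp
    rw [Finset.mem_filter] at hp
    obtain ⟨hmem, hp10, hnd⟩ := hp
    rw [mem_S2'] at hmem
    have hp20 : p.2 0 = 1 := by
      have := (hmem.2.2 (by omega) 0).1 rfl
      omega
    have hlist : (List.ofFn fun j : Fin (r+2) => (p.1 j, p.2 j))
        = (0, 1) :: List.ofFn (fun j : Fin (r+1) => (p.1 j.succ, p.2 j.succ)) := by
      rw [List.ofFn_succ]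
      congr 1
      simp only [Prod.mk.injEq]
      exact ⟨hp10, hp20⟩
    rw [hlist, blocksOp_pop]
    have hc : 2*u+v-1-1 = 2*u+(v-1)-1 := by omega
    rw [hc]
    rfl

lemma Z00 : Z L0 L1 0 0 = 1 := by simp [Z]

lemma Z01 : Z L0 L1 0 1 = L1 0 * Z L0 L1 0 0 := by
  have : Z L0 L1 0 (0+1) = L1 (0+1-1) * Z L0 L1 0 0 := by simp [Z]
  simpa using this

lemma curly_rec (u v : ℕ) (h : ¬(u = 0 ∧ v = 0)) :
    curly L0 L1 1 u v
      = (if u = 0 then 0 else L0 (2*u+v-1) * curly L0 L1 1 (u-1) v)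
      + (if v = 0 then 0 else L1 (2*u+v-1) * curly L0 L1 1 u (v-1)) := by
  classical
  rw [← csum_extend L0 L1 u v (u+v+1) (by omega)]
  have hsplit : csum L0 L1 u v (u+v+1)
      = (∑ i ∈ Finset.range (u+v+1), ∑ p ∈ (S2 (i+1) u v).filter (fun p => ¬ p.1 0 = 0),
          blocksOp L0 L1 (2*u+v-1) (List.ofFn fun j => (p.1 j, p.2 j)))
      + ((∑ i ∈ Finset.range (u+v+1), ∑ p ∈ (S2 (i+1) u v).filter
            (fun p => p.1 0 = 0 ∧ (i = 0 ∨ 2 ≤ p.2 0)),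
          blocksOp L0 L1 (2*u+v-1) (List.ofFn fun j => (p.1 j, p.2 j)))
        + (∑ i ∈ Finset.range (u+v+1), ∑ p ∈ (S2 (i+1) u v).filter
            (fun p => p.1 0 = 0 ∧ ¬(i = 0 ∨ 2 ≤ p.2 0)),
          blocksOp L0 L1 (2*u+v-1) (List.ofFn fun j => (p.1 j, p.2 j)))) := by
    unfold csum
    rw [← Finset.sum_add_distrib, ← Finset.sum_add_distrib]
    refine Finset.sum_congr rfl (fun i _ => ?_)
    have hi1 := Finset.sum_filter_add_sum_filter_not (S2 (i+1) u v) (fun p => p.1 0 = 0)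
      (fun p => blocksOp L0 L1 (2*u+v-1) (List.ofFn fun j => (p.1 j, p.2 j)))
    have hi2 := Finset.sum_filter_add_sum_filter_not
      ((S2 (i+1) u v).filter (fun p => p.1 0 = 0)) (fun p => (i = 0 ∨ 2 ≤ p.2 0))
      (fun p => blocksOp L0 L1 (2*u+v-1) (List.ofFn fun j => (p.1 j, p.2 j)))
    rw [Finset.filter_filter, Finset.filter_filter] at hi2
    rw [← hi1, ← hi2]
    abel
  rw [hsplit]
  congr 1
  · by_cases hu : u = 0
    · rw [if_pos hu]
      subst hu
      refine Finset.sum_eq_zero (fun i _ => ?_)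
      rw [Finset.filter_false_of_mem, Finset.sum_empty]
      intro p hp
      rw [mem_S2'] at hp
      have h0 : p.1 0 ≤ ∑ j, p.1 j :=
        Finset.single_le_sum (fun j _ => Nat.zero_le _) (Finset.mem_univ 0)
      intro hc
      omega
    · rw [if_neg hu]
      rw [Finset.sum_congr rfl (fun i _ => bijA L0 L1 i u v (by omega)), ← Finset.mul_sum]
      congr 1
      exact csum_extend L0 L1 (u-1) v (u+v+1)
        (by have := min_le_right (u-1) v; have := min_le_left (u-1) v; omega)
  · by_cases hv : v = 0
    · rw [if_pos hv]
      subst hv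
      have hu : ¬ u = 0 := fun h' => h ⟨h', rfl⟩
      have key : ∀ (i : ℕ), ∀ p ∈ S2 (i+1) u 0, ¬ p.1 0 = 0 := by
        intro i p hp
        rw [mem_S2'] at hp
        obtain ⟨h1, h2, h3⟩ := hp
        rcases Nat.eq_zero_or_pos i with hi | hi
        · subst hi
          have hs : ∑ j, p.1 j = p.1 0 + ∑ j : Fin 0, p.1 j.succ := Fin.sum_univ_succ _
          have h0 : (∑ j : Fin 0, p.1 j.succ) = 0 := Finset.sum_empty
          intro hc
          omega
        · have hp2 : 1 ≤ p.2 0 := (h3 (by omega) 0).1 rfl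
          have h0 : p.2 0 ≤ ∑ j, p.2 j :=
            Finset.single_le_sum (fun j _ => Nat.zero_le _) (Finset.mem_univ 0)
          intro _
          omega
      rw [Finset.sum_eq_zero, Finset.sum_eq_zero, add_zero]
      · intro i _
        rw [Finset.filter_false_of_mem (fun p hp hc => key i p hp hc.1), Finset.sum_empty]
      · intro i _
        rw [Finset.filter_false_of_mem (fun p hp hc => key i p hp hc.1), Finset.sum_empty]
    · rw [if_neg hv]
      have hB1 : ∑ i ∈ Finset.range (u+v+1), ∑ p ∈ (S2 (i+1) u v).filter
            (fun p => p.1 0 = 0 ∧ (i = 0 ∨ 2 ≤ p.2 0)),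
          blocksOp L0 L1 (2*u+v-1) (List.ofFn fun j => (p.1 j, p.2 j))
          = ∑ i ∈ Finset.range (u+v+1), L1 (2*u+v-1) *
              ∑ q ∈ (S2 (i+1) u (v-1)).filter (fun q => q.1 0 = 0),
                blocksOp L0 L1 (2*u+(v-1)-1) (List.ofFn fun j => (q.1 j, q.2 j)) :=
        Finset.sum_congr rfl (fun i _ => bijB1 L0 L1 i u v (by omega))
      have hB2 : ∑ i ∈ Finset.range (u+v+1), ∑ p ∈ (S2 (i+1) u v).filter
            (fun p => p.1 0 = 0 ∧ ¬(i = 0 ∨ 2 ≤ p.2 0)),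
          blocksOp L0 L1 (2*u+v-1) (List.ofFn fun j => (p.1 j, p.2 j))
          = ∑ i ∈ Finset.range (u+v+1), L1 (2*u+v-1) *
              ∑ q ∈ (S2 (i+1) u (v-1)).filter (fun q => ¬ q.1 0 = 0),
                blocksOp L0 L1 (2*u+(v-1)-1) (List.ofFn fun j => (q.1 j, q.2 j)) := by
        rw [Finset.sum_range_succ' _ (u+v), Finset.sum_range_succ _ (u+v)]
        have hz1 : ∑ p ∈ (S2 (0+1) u v).filter
            (fun p => p.1 0 = 0 ∧ ¬((0:ℕ) = 0 ∨ 2 ≤ p.2 0)),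
            blocksOp L0 L1 (2*u+v-1) (List.ofFn fun j => (p.1 j, p.2 j)) = 0 := by
          rw [Finset.filter_false_of_mem (fun p _ hc => hc.2 (Or.inl rfl)), Finset.sum_empty]
        have hz2 : S2 (u+v+1) u (v-1) = ∅ :=
          S2_empty (by have := min_le_right u (v-1); omega)
        rw [hz1, hz2, add_zero, Finset.filter_empty, Finset.sum_empty, mul_zero, add_zero]
        exact Finset.sum_congr rfl (fun i _ => bijB2 L0 L1 i u v (by omega))
      rw [hB1, hB2, ← Finset.sum_add_distrib]
      have hcomb : ∀ i ∈ Finset.range (u+v+1),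
          (L1 (2*u+v-1) * ∑ q ∈ (S2 (i+1) u (v-1)).filter (fun q => q.1 0 = 0),
            blocksOp L0 L1 (2*u+(v-1)-1) (List.ofFn fun j => (q.1 j, q.2 j)))
          + (L1 (2*u+v-1) * ∑ q ∈ (S2 (i+1) u (v-1)).filter (fun q => ¬ q.1 0 = 0),
            blocksOp L0 L1 (2*u+(v-1)-1) (List.ofFn fun j => (q.1 j, q.2 j)))
          = L1 (2*u+v-1) * ∑ q ∈ S2 (i+1) u (v-1),
              blocksOp L0 L1 (2*u+(v-1)-1) (List.ofFn fun j => (q.1 j, q.2 j)) := by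
        intro i _
        rw [← mul_add, Finset.sum_filter_add_sum_filter_not]
      rw [Finset.sum_congr rfl hcomb, ← Finset.mul_sum]
      congr 1
      exact csum_extend L0 L1 u (v-1) (u+v+1)
        (by have := min_le_right u (v-1); omega)

lemma curly_zero : curly L0 L1 1 0 0 = 1 := by
  rw [curly_eq_csum]
  unfold csum
  rw [show (0 ⊓ 0 + 1) = 1 by norm_num, Finset.sum_range_one]
  have hset : S2 1 0 0 = {((fun _ => 0), (fun _ => 0))} := by
    ext p
    rw [mem_S2', Finset.mem_singleton]
    constructor
    · rintro ⟨h1, h2, _⟩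
      rw [Fin.sum_univ_one] at h1 h2
      refine Prod.ext ?_ ?_ <;> funext i <;> rw [Subsingleton.elim i 0]
      · exact h1
      · exact h2
    · rintro rfl
      exact ⟨by simp, by simp, fun hh => absurd hh (by omega)⟩
  rw [hset, Finset.sum_singleton]
  have hl : (List.ofFn fun j : Fin 1 =>
      (((fun _ => 0, fun _ => 0) : (Fin 1 → ℕ) × (Fin 1 → ℕ)).1 j,
       ((fun _ => 0, fun _ => 0) : (Fin 1 → ℕ) × (Fin 1 → ℕ)).2 j)) = [((0:ℕ), (0:ℕ))] := by
    simp [List.ofFn_succ]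
  rw [hl]
  show pow0 L0 _ 0 * pow1 L1 _ 0 * blocksOp L0 L1 _ [] = 1
  simp [pow0, pow1, blocksOp]

lemma curly_eq_Z (n : ℕ) : ∀ u v : ℕ, u + v ≤ n → curly L0 L1 1 u v = Z L0 L1 u v := by
  induction n with
  | zero =>
    intro u v hle
    have hu : u = 0 := by omega
    have hv : v = 0 := by omega
    subst hu; subst hv
    rw [curly_zero, Z00]
  | succ n ih =>
    intro u v hle
    by_cases h00 : u = 0 ∧ v = 0
    · obtain ⟨rfl, rfl⟩ := h00
      rw [curly_zero, Z00]
    · rw [curly_rec L0 L1 u v h00, Z_rec L0 L1 u v h00]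
      congr 1
      · by_cases hu : u = 0
        · rw [if_pos hu, if_pos hu]
        · rw [if_neg hu, if_neg hu, ih (u-1) v (by omega)]
      · by_cases hv : v = 0
        · rw [if_pos hv, if_pos hv]
        · rw [if_neg hv, if_neg hv, ih u (v-1) (by omega)]

lemma Gsum (m : ℕ) :
    ∑ t ∈ Finset.range ((m+2)/2 + 1), Z L0 L1 t (m+2-2*t)
      = L0 (m+1) * (∑ t ∈ Finset.range (m/2 + 1), Z L0 L1 t (m-2*t))
      + L1 (m+1) * (∑ t ∈ Finset.range ((m+1)/2 + 1), Z L0 L1 t (m+1-2*t)) := by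
  rcases Nat.even_or_odd m with ⟨a, ha⟩ | ⟨a, ha⟩
  · subst ha
    have e1 : (a + a + 2)/2 + 1 = a + 2 := by omega
    have e2 : (a + a)/2 + 1 = a + 1 := by omega
    have e3 : (a + a + 1)/2 + 1 = a + 1 := by omega
    rw [e1, e2, e3]
    have hterm : ∀ t ∈ Finset.range (a+2), Z L0 L1 t (a+a+2-2*t)
        = (if t = 0 then 0 else L0 (a+a+1) * Z L0 L1 (t-1) (a+a+2-2*t))
          + (if a+a+2-2*t = 0 then 0 else L1 (a+a+1) * Z L0 L1 t (a+a+1-2*t)) := by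
      intro t ht
      rw [Finset.mem_range] at ht
      have hr := Z_rec L0 L1 t (a+a+2-2*t) (by omega)
      have q1 : 2*t + (a+a+2-2*t) - 1 = a+a+1 := by omega
      have q2 : a+a+2-2*t-1 = a+a+1-2*t := by omega
      rw [q1, q2] at hr
      exact hr
    rw [Finset.sum_congr rfl hterm, Finset.sum_add_distrib]
    congr 1
    · rw [Finset.sum_range_succ', if_pos rfl, add_zero]
      have hpt : ∀ t ∈ Finset.range (a+1),
          (if t+1 = 0 then 0 else L0 (a+a+1) * Z L0 L1 (t+1-1) (a+a+2-2*(t+1)))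
          = L0 (a+a+1) * Z L0 L1 t (a+a-2*t) := by
        intro t _
        rw [if_neg (by omega)]
        have q1 : t+1-1 = t := by omega
        have q2 : a+a+2-2*(t+1) = a+a-2*t := by omega
        rw [q1, q2]
      rw [Finset.sum_congr rfl hpt, ← Finset.mul_sum]
    · rw [Finset.sum_range_succ, if_pos (by omega), add_zero]
      have hpt : ∀ t ∈ Finset.range (a+1),
          (if a+a+2-2*t = 0 then 0 else L1 (a+a+1) * Z L0 L1 t (a+a+1-2*t))
          = L1 (a+a+1) * Z L0 L1 t (a+a+1-2*t) := by
        intro t ht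
        rw [Finset.mem_range] at ht
        rw [if_neg (by omega)]
      rw [Finset.sum_congr rfl hpt, ← Finset.mul_sum]
  · subst ha
    have e1 : (2*a+1+2)/2 + 1 = a + 2 := by omega
    have e2 : (2*a+1)/2 + 1 = a + 1 := by omega
    have e3 : (2*a+1+1)/2 + 1 = a + 2 := by omega
    rw [e1, e2, e3]
    have hterm : ∀ t ∈ Finset.range (a+2), Z L0 L1 t (2*a+1+2-2*t)
        = (if t = 0 then 0 else L0 (2*a+1+1) * Z L0 L1 (t-1) (2*a+1+2-2*t))
          + (if 2*a+1+2-2*t = 0 then 0 else L1 (2*a+1+1) * Z L0 L1 t (2*a+1+1-2*t)) := by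
      intro t ht
      rw [Finset.mem_range] at ht
      have hr := Z_rec L0 L1 t (2*a+1+2-2*t) (by omega)
      have q1 : 2*t + (2*a+1+2-2*t) - 1 = 2*a+1+1 := by omega
      have q2 : 2*a+1+2-2*t-1 = 2*a+1+1-2*t := by omega
      rw [q1, q2] at hr
      exact hr
    rw [Finset.sum_congr rfl hterm, Finset.sum_add_distrib]
    congr 1
    · rw [Finset.sum_range_succ', if_pos rfl, add_zero]
      have hpt : ∀ t ∈ Finset.range (a+1),
          (if t+1 = 0 then 0 else L0 (2*a+1+1) * Z L0 L1 (t+1-1) (2*a+1+2-2*(t+1)))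
          = L0 (2*a+1+1) * Z L0 L1 t (2*a+1-2*t) := by
        intro t _
        rw [if_neg (by omega)]
        have q1 : t+1-1 = t := by omega
        have q2 : 2*a+1+2-2*(t+1) = 2*a+1-2*t := by omega
        rw [q1, q2]
      rw [Finset.sum_congr rfl hpt, ← Finset.mul_sum]
    · have hpt : ∀ t ∈ Finset.range (a+2),
          (if 2*a+1+2-2*t = 0 then 0 else L1 (2*a+1+1) * Z L0 L1 t (2*a+1+1-2*t))
          = L1 (2*a+1+1) * Z L0 L1 t (2*a+1+1-2*t) := by
        intro t ht
        rw [Finset.mem_range] at ht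
        rw [if_neg (by omega)]
      rw [Finset.sum_congr rfl hpt, ← Finset.mul_sum]

end Aux

/-- If `Y_{n+2} = L0(n) Y_n + L1(n) Y_{n+1}` with `Y_0 = 0`, `Y_1 = B`, then for
every `n ≥ 1`, `Y_n = Σ_{t=0}^{⌊(n−1)/2⌋} {L0^(t) L1^(n−1−2t)}_1 B`. -/
theorem operator_difference_solution_I
    {F V : Type*} [Field F] [AddCommGroup V] [Module F V]
    (L0 L1 : ℕ → Module.End F V) (Y : ℕ → V) (B : V)
    (hrec : ∀ n : ℕ, Y (n + 2) = L0 n (Y n) + L1 n (Y (n + 1)))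
    (h0 : Y 0 = 0) (h1 : Y 1 = B) :
    ∀ n : ℕ, 1 ≤ n →
      Y n = ∑ t ∈ Finset.range ((n - 1) / 2 + 1),
        (curly L0 L1 1 t (n - 1 - 2 * t)) B := by
  have hcz : ∀ u v : ℕ, curly L0 L1 1 u v = Z L0 L1 u v :=
    fun u v => curly_eq_Z L0 L1 (u+v) u v le_rfl
  intro n
  induction n using Nat.strong_induction_on with
  | _ n ih =>
    intro hn
    by_cases hn1 : n = 1
    · subst hn1
      rw [show (1-1)/2+1 = 1 by norm_num, Finset.sum_range_one,
        show (1:ℕ)-1-2*0 = 0 by norm_num, hcz, Z00, h1]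
      exact (Module.End.one_apply B).symm
    · by_cases hn2 : n = 2
      · subst hn2
        rw [show (2-1)/2+1 = 1 by norm_num, Finset.sum_range_one,
          show (2:ℕ)-1-2*0 = 1 by norm_num, hcz, Z01, Z00, mul_one]
        have h2 : Y 2 = L0 0 (Y 0) + L1 0 (Y 1) := hrec 0
        rw [h0, h1, map_zero, zero_add] at h2
        exact h2
      · obtain ⟨m, rfl⟩ : ∃ m, n = m + 3 := ⟨n - 3, by omega⟩
        have key : Y (m+3) = L0 (m+1) (Y (m+1)) + L1 (m+1) (Y (m+2)) := hrec (m+1)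
        rw [ih (m+1) (by omega) (by omega), ih (m+2) (by omega) (by omega)] at key
        rw [key]
        have c1 : ∀ t ∈ Finset.range ((m+1-1)/2 + 1),
            (curly L0 L1 1 t (m+1-1-2*t)) B = (Z L0 L1 t (m-2*t)) B := by
          intro t _
          have e : m+1-1-2*t = m-2*t := by omega
          rw [e, hcz]
        have c2 : ∀ t ∈ Finset.range ((m+2-1)/2 + 1),
            (curly L0 L1 1 t (m+2-1-2*t)) B = (Z L0 L1 t (m+1-2*t)) B := by
          intro t _
          have e : m+2-1-2*t = m+1-2*t := by omega
          rw [e, hcz]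
        have c3 : ∀ t ∈ Finset.range ((m+3-1)/2 + 1),
            (curly L0 L1 1 t (m+3-1-2*t)) B = (Z L0 L1 t (m+2-2*t)) B := by
          intro t _
          have e : m+3-1-2*t = m+2-2*t := by omega
          rw [e, hcz]
        rw [Finset.sum_congr rfl c1, Finset.sum_congr rfl c2, Finset.sum_congr rfl c3]
        rw [← LinearMap.sum_apply, ← LinearMap.sum_apply, ← LinearMap.sum_apply]
        have hG := Gsum L0 L1 m
        have em1 : (m+1-1)/2 + 1 = m/2 + 1 := by omega
        have em2 : (m+2-1)/2 + 1 = (m+1)/2 + 1 := by omega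
        have em3 : (m+3-1)/2 + 1 = (m+2)/2 + 1 := by omega
        rw [em1, em2, em3, hG]
        rw [LinearMap.add_apply, Module.End.mul_apply, Module.End.mul_apply]
end

section
/- Let k ≥ 1, N = 2k, and suppose |c_i| = ρ for all i, for some real ρ ≥ 0. Define L0(n) = M₊ for n even and L0(n) = M₋ for n odd, and L1(n) = M₋ for n even and L1(n) = M₊ for n odd. Then for every n ≥ 4, the ordered product L0(n−2) ∘ L1(n−4) ∘ L1(n−5) ∘ ⋯ ∘ L1(1) ∘ L1(0) (with L1(0) applied first and L0(n−2) applied last) equals ρ^{n−4} D₊ if n is even, and ρ^{n−3} M₋ if n is odd. -/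
/-- `M₊` sends `e_{N−i+1} ↦ c_i e_i` for `1 ≤ i ≤ k` and `e_j ↦ 0` for
`1 ≤ j ≤ k` (here `N = 2k`; matrix with respect to the standard basis,
0-indexed). -/
noncomputable def Mplus (k : ℕ) (c : Fin k → ℂ) :
    Matrix (Fin (2 * k)) (Fin (2 * k)) ℂ := fun a b =>
  if h : (a : ℕ) < k ∧ (a : ℕ) + (b : ℕ) = 2 * k - 1 then c ⟨a, h.1⟩ else 0

/-- `M₋ = M₊†` sends `e_i ↦ conj(c_i) e_{N−i+1}` for `1 ≤ i ≤ k` and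
`e_j ↦ 0` for `k < j ≤ N`. -/
noncomputable def Mminus (k : ℕ) (c : Fin k → ℂ) :
    Matrix (Fin (2 * k)) (Fin (2 * k)) ℂ := fun a b =>
  if h : (b : ℕ) < k ∧ (a : ℕ) + (b : ℕ) = 2 * k - 1 then
    starRingEnd ℂ (c ⟨b, h.1⟩) else 0

/-- `D₊` sends `e_i ↦ |c_i|² e_i` for `1 ≤ i ≤ k` and `e_j ↦ 0` for
`k < j ≤ N`. -/
noncomputable def Dplus (k : ℕ) (c : Fin k → ℂ) :
    Matrix (Fin (2 * k)) (Fin (2 * k)) ℂ := fun a b =>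
  if h : a = b ∧ (a : ℕ) < k then ((‖c ⟨a, h.2⟩‖) ^ 2 : ℂ) else 0

/-- `D₋` sends `e_j ↦ |c_{N−j+1}|² e_j` for `k < j ≤ N` and `e_i ↦ 0` for
`1 ≤ i ≤ k`. -/
noncomputable def Dminus (k : ℕ) (c : Fin k → ℂ) :
    Matrix (Fin (2 * k)) (Fin (2 * k)) ℂ := fun a b =>
  if h : a = b ∧ k ≤ (a : ℕ) then
    ((‖c ⟨2 * k - 1 - (a : ℕ), by have := a.isLt; omega⟩‖) ^ 2 : ℂ)
  else 0

/-- `L0(n) = M₊` for `n` even, `M₋` for `n` odd. -/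
noncomputable def Lzero (k : ℕ) (c : Fin k → ℂ) (n : ℕ) :
    Matrix (Fin (2 * k)) (Fin (2 * k)) ℂ :=
  if Even n then Mplus k c else Mminus k c

/-- `L1(n) = M₋` for `n` even, `M₊` for `n` odd. -/
noncomputable def Lone (k : ℕ) (c : Fin k → ℂ) (n : ℕ) :
    Matrix (Fin (2 * k)) (Fin (2 * k)) ℂ :=
  if Even n then Mminus k c else Mplus k c

lemma mplus_mul_mminus (k : ℕ) (c : Fin k → ℂ) :
    Mplus k c * Mminus k c = Dplus k c := by
  ext a b
  rw [Matrix.mul_apply]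
  unfold Mplus Mminus Dplus
  by_cases ha : (a : ℕ) < k
  · have hx : 2 * k - 1 - (a : ℕ) < 2 * k := by omega
    rw [Finset.sum_eq_single (⟨2 * k - 1 - (a : ℕ), hx⟩ : Fin (2 * k))]
    · rw [dif_pos ⟨ha, by simp; omega⟩]
      by_cases hab : a = b
      · subst hab
        rw [dif_pos ⟨ha, by simp; omega⟩, dif_pos ⟨rfl, ha⟩,
          Complex.mul_conj]
        norm_cast
        exact (Complex.sq_norm _).symm
      · rw [dif_neg, dif_neg]
        · ring
        · exact fun h => hab h.1
        · rintro ⟨hb, h2⟩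
          simp only [] at h2
          exact hab (Fin.ext (by omega))
    · intro x _ hne
      rw [dif_neg, zero_mul]
      rintro ⟨_, h2⟩
      exact hne (Fin.ext (by simp; omega))
    · simp
  · rw [dif_neg (fun h => ha h.2)]
    apply Finset.sum_eq_zero
    intro x _
    rw [dif_neg (fun h => ha h.1), zero_mul]

lemma mminus_mul_dplus (k : ℕ) (c : Fin k → ℂ) (ρ : ℝ)
    (hc : ∀ i, ‖c i‖ = ρ) :
    Mminus k c * Dplus k c = ((ρ ^ 2 : ℝ) : ℂ) • Mminus k c := by
  ext a b
  rw [Matrix.mul_apply, Matrix.smul_apply]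
  unfold Mminus Dplus
  rw [Finset.sum_eq_single b]
  · by_cases hb : (b : ℕ) < k
    · rw [dif_pos (show b = b ∧ (b : ℕ) < k from ⟨rfl, hb⟩), hc]
      by_cases hab : (b : ℕ) < k ∧ (a : ℕ) + (b : ℕ) = 2 * k - 1
      · rw [dif_pos hab, smul_eq_mul]
        push_cast
        ring
      · rw [dif_neg hab, zero_mul, smul_zero]
    · rw [dif_neg (fun h : b = b ∧ (b : ℕ) < k => hb h.2),
        dif_neg (fun h : (b : ℕ) < k ∧ _ => hb h.1), mul_zero, smul_zero]
  · intro x _ hne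
    rw [dif_neg (fun h : x = b ∧ (x : ℕ) < k => hne h.1), mul_zero]
  · simp

noncomputable def Qprod (k : ℕ) (c : Fin k → ℂ) (m : ℕ) :
    Matrix (Fin (2 * k)) (Fin (2 * k)) ℂ :=
  ((List.range m).map (fun j => Lone k c (m - 1 - j))).prod

lemma Qprod_succ (k : ℕ) (c : Fin k → ℂ) (m : ℕ) :
    Qprod k c (m + 1) = Lone k c m * Qprod k c m := by
  unfold Qprod
  rw [List.range_succ_eq_map, List.map_cons, List.map_map, List.prod_cons]
  congr 1
  have hf : ((fun j => Lone k c (m + 1 - 1 - j)) ∘ Nat.succ)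
      = fun j => Lone k c (m - 1 - j) := by
    funext j
    have h : m + 1 - 1 - Nat.succ j = m - 1 - j := by omega
    simp only [Function.comp_apply, h]
  rw [hf]

lemma Qprod_spec (k : ℕ) (c : Fin k → ℂ) (ρ : ℝ)
    (hc : ∀ i, ‖c i‖ = ρ) (m : ℕ) :
    (Even m → m ≠ 0 → Qprod k c m = ((ρ ^ (m - 2) : ℝ) : ℂ) • Dplus k c) ∧
    (Odd m → Qprod k c m = ((ρ ^ (m - 1) : ℝ) : ℂ) • Mminus k c) := by
  induction m with
  | zero =>
    refine ⟨fun _ h => absurd rfl h, fun h => absurd h (by simp)⟩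
  | succ m ih =>
    constructor
    · intro he _
      have hm : Odd m := by
        rw [Nat.odd_iff]; rw [Nat.even_iff] at he; omega
      have hL : Lone k c m = Mplus k c := by
        unfold Lone; rw [if_neg (by rwa [Nat.not_even_iff_odd])]
      rw [Qprod_succ, ih.2 hm, hL, Matrix.mul_smul, mplus_mul_mminus]
      rfl
    · intro ho
      have hm : Even m := by
        rw [Nat.even_iff]; rw [Nat.odd_iff] at ho; omega
      have hL : Lone k c m = Mminus k c := by
        unfold Lone; rw [if_pos hm]
      by_cases h0 : m = 0
      · subst h0
        rw [Qprod_succ, hL]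
        unfold Qprod
        simp
      · have h2 : m - 2 + 2 = m := by
          rw [Nat.even_iff] at hm; omega
        rw [Qprod_succ, ih.1 hm h0, hL, Matrix.mul_smul,
          mminus_mul_dplus k c ρ hc, smul_smul, ← Complex.ofReal_mul,
          ← pow_add, h2]
        rfl

/-- If `|c_i| = ρ` for all `i`, then for every `n ≥ 4` the ordered product
`L0(n−2) ∘ L1(n−4) ∘ L1(n−5) ∘ ⋯ ∘ L1(1) ∘ L1(0)` (with `L1(0)` applied first)
equals `ρ^{n−4} D₊` if `n` is even and `ρ^{n−3} M₋` if `n` is odd. -/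
theorem Lzero_descending_Lone_product (k : ℕ) (hk : 1 ≤ k) (c : Fin k → ℂ)
    (ρ : ℝ) (hρ : 0 ≤ ρ) (hc : ∀ i, ‖c i‖ = ρ)
    (n : ℕ) (hn : 4 ≤ n) :
    (Even n →
      Lzero k c (n - 2) *
        ((List.range (n - 3)).map (fun j => Lone k c (n - 4 - j))).prod
        = ((ρ ^ (n - 4) : ℝ) : ℂ) • Dplus k c) ∧
    (Odd n →
      Lzero k c (n - 2) *
        ((List.range (n - 3)).map (fun j => Lone k c (n - 4 - j))).prod
        = ((ρ ^ (n - 3) : ℝ) : ℂ) • Mminus k c) := by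
  have hQ : ((List.range (n - 3)).map (fun j => Lone k c (n - 4 - j))).prod
      = Qprod k c (n - 3) := rfl
  constructor
  · intro he
    have he' : Even (n - 2) := by
      rw [Nat.even_iff] at he ⊢; omega
    have ho3 : Odd (n - 3) := by
      rw [Nat.odd_iff]; rw [Nat.even_iff] at he; omega
    rw [hQ, (Qprod_spec k c ρ hc (n - 3)).2 ho3]
    unfold Lzero
    rw [if_pos he', Matrix.mul_smul, mplus_mul_mminus]
    have h4 : n - 3 - 1 = n - 4 := by omega
    rw [h4]
  · intro ho
    have ho' : ¬ Even (n - 2) := by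
      rw [Nat.even_iff]; rw [Nat.odd_iff] at ho; omega
    have he3 : Even (n - 3) := by
      rw [Nat.even_iff]; rw [Nat.odd_iff] at ho; omega
    have h0 : n - 3 ≠ 0 := by rw [Nat.odd_iff] at ho; omega
    rw [hQ, (Qprod_spec k c ρ hc (n - 3)).1 he3 h0]
    unfold Lzero
    rw [if_neg ho', Matrix.mul_smul, mminus_mul_dplus k c ρ hc, smul_smul,
      ← Complex.ofReal_mul, ← pow_add]
    have h3 : n - 3 - 2 + 2 = n - 3 := by
      rw [Nat.odd_iff] at ho; omega
    rw [h3]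
end
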